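/- Let f : (0,∞) → ℂ be measurable and let σ ∈ ℝ be such that t ↦ e^{−σt} |f(t)| is integrable on (0,∞). If ∫₀^∞ e^{−st} f(t) dt is a real number for every real s > σ, then f(t) is real (its imaginary part vanishes) for almost every t > 0. -/

import Mathlib

open MeasureTheory Set Filter Complex
open scoped FourierTransform Topology

/-- Compactly supported smooth functions are Schwartz. -/
lemma exists_schwartz_of_hasCompactSupport {φ : ℝ → ℂ}
    (hφ : ContDiff ℝ ((⊤ : ℕ∞)) φ) (h : HasCompactSupport φ) :
    ∃ ψ : SchwartzMap ℝ ℂ, ⇑ψ = φ := by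
  refine ⟨⟨φ, hφ, fun k n => ?_⟩, rfl⟩
  set u : ℝ → ℝ := fun x => ‖x‖ ^ k * ‖iteratedFDeriv ℝ n φ x‖ with hu
  have hcont : Continuous u :=
    (continuous_norm.pow k).mul (hφ.continuous_iteratedFDeriv (by exact_mod_cast le_top)).norm
  have hcs : HasCompactSupport u := by
    have : HasCompactSupport fun x => ‖iteratedFDeriv ℝ n φ x‖ := (h.iteratedFDeriv n).norm
    exact HasCompactSupport.mul_left this
  obtain ⟨x₀, hx₀⟩ := hcont.exists_forall_ge_of_hasCompactSupport hcs
  exact ⟨u x₀, hx₀⟩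

theorem real_laplace_transform_implies_real_function
    (f : ℝ → ℂ) (σ : ℝ)
    (hfm : Measurable f)
    (hf : IntegrableOn (fun t => Real.exp (-σ * t) * ‖f t‖) (Ioi 0))
    (hreal : ∀ s : ℝ, σ < s →
      (∫ t in Ioi (0:ℝ), Complex.exp (-(s : ℂ) * t) * f t).im = 0) :
    ∀ᵐ t ∂(volume.restrict (Ioi (0:ℝ))), (f t).im = 0 := by
  -- the imaginary part of f, as a complex function
  set g : ℝ → ℂ := fun t => ((f t).im : ℂ) with hg
  have hgm : Measurable g := Complex.measurable_ofReal.comp (Complex.measurable_im.comp hfm)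
  -- integrability of the Laplace integrand for f and g
  have key_int : ∀ (z : ℂ), σ < z.re → ∀ (h : ℝ → ℂ), Measurable h →
      (∀ t : ℝ, ‖h t‖ ≤ ‖f t‖) →
      IntegrableOn (fun t : ℝ => Complex.exp (-z * t) * h t) (Ioi (0:ℝ)) := by
    intro z hz h hm hle
    apply Integrable.mono hf
    · exact ((Complex.measurable_exp.comp
        ((measurable_const.mul Complex.measurable_ofReal))).mul hm).aestronglyMeasurable
    · filter_upwards [ae_restrict_mem measurableSet_Ioi] with t ht
      have ht' : (0:ℝ) ≤ t := le_of_lt ht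
      have h1 : ‖Complex.exp (-z * t) * h t‖ = Real.exp ((-z * t).re) * ‖h t‖ := by
        simp [map_mul, Complex.norm_exp]
      have hre : (-z * (t:ℂ)).re = -z.re * t := by
        simp [Complex.mul_re]
      rw [h1, hre]
      have h2 : Real.exp (-z.re * t) ≤ Real.exp (-σ * t) := by
        apply Real.exp_le_exp.2
        nlinarith
      have h3 : Real.exp (-z.re * t) * ‖h t‖
          ≤ Real.exp (-σ * t) * ‖f t‖ :=
        mul_le_mul h2 (hle t) (norm_nonneg _) (Real.exp_nonneg _)
      exact h3.trans (le_abs_self _)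
  have hg_le : ∀ t : ℝ, ‖g t‖ ≤ ‖f t‖ := by
    intro t
    simp only [hg, Complex.norm_real, Real.norm_eq_abs]
    exact Complex.abs_im_le_norm (f t)
  -- the Laplace transform of g
  set F : ℂ → ℂ := fun z => ∫ t in Ioi (0:ℝ), Complex.exp (-z * t) * g t with hF
  -- F vanishes on real s > σ
  have hF_real : ∀ s : ℝ, σ < s → F s = 0 := by
    intro s hs
    have hint : IntegrableOn (fun t : ℝ => Complex.exp (-(s:ℂ) * t) * f t) (Ioi (0:ℝ)) :=
      key_int s (by simpa using hs) f hfm (fun t => le_refl _)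
    have him : ∫ t in Ioi (0:ℝ), (Complex.exp (-(s:ℂ) * t) * f t).im = 0 := by
      have := integral_im hint
      simp only [RCLike.im_to_complex] at this
      rw [this]
      exact hreal s hs
    have hexp : ∀ t : ℝ, Complex.exp (-(s:ℂ) * t) = ((Real.exp (-s * t) : ℝ) : ℂ) := by
      intro t
      rw [Complex.ofReal_exp]; norm_cast
    have heq : ∀ t : ℝ, Complex.exp (-(s:ℂ) * t) * g t
        = (((Real.exp (-s * t) * (f t).im : ℝ)) : ℂ) := by
      intro t
      rw [hexp t, hg]; push_cast; ring
    have heq2 : ∀ t : ℝ, (Complex.exp (-(s:ℂ) * t) * f t).im = Real.exp (-s * t) * (f t).im := by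
      intro t
      rw [hexp t]
      simp only [Complex.mul_im, Complex.ofReal_re, Complex.ofReal_im, zero_mul, add_zero]
    simp only [hF]
    calc ∫ t in Ioi (0:ℝ), Complex.exp (-(s:ℂ) * t) * g t
        = ∫ t in Ioi (0:ℝ), (((Real.exp (-s * t) * (f t).im : ℝ)) : ℂ) := by
          simp only [heq]
      _ = ((∫ t in Ioi (0:ℝ), Real.exp (-s * t) * (f t).im : ℝ) : ℂ) := integral_ofReal
      _ = 0 := by
          rw [show (∫ t in Ioi (0:ℝ), Real.exp (-s * t) * (f t).im : ℝ) = 0 from ?_]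
          · simp
          · have h4 : (∫ t in Ioi (0:ℝ), Real.exp (-s * t) * (f t).im)
                = ∫ t in Ioi (0:ℝ), (Complex.exp (-(s:ℂ) * t) * f t).im :=
              setIntegral_congr_fun measurableSet_Ioi (fun t _ => (heq2 t).symm)
            rw [h4]; exact him
  -- F is differentiable on the half plane
  set U : Set ℂ := {z | σ < z.re} with hU
  have hU_open : IsOpen U := isOpen_lt continuous_const Complex.continuous_re
  have hF_diff : DifferentiableOn ℂ F U := by
    intro z₀ hz₀
    have hz₀' : σ < z₀.re := hz₀
    set ε : ℝ := (z₀.re - σ) / 2 with hε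
    have hε_pos : 0 < ε := div_pos (by linarith) two_pos
    have key := hasDerivAt_integral_of_dominated_loc_of_deriv_le (μ := volume.restrict (Ioi 0))
      (F := fun (z : ℂ) (t : ℝ) => Complex.exp (-z * t) * g t)
      (F' := fun (z : ℂ) (t : ℝ) => Complex.exp (-z * t) * (-(t:ℂ)) * g t)
      (x₀ := z₀)
      (bound := fun t => (Real.exp 1 * ε)⁻¹ * (Real.exp (-σ * t) * ‖f t‖))
      (Metric.ball_mem_nhds z₀ hε_pos) ?_ ?_ ?_ ?_ ?_ ?_
    · exact (key.2).differentiableAt.differentiableWithinAt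
    · filter_upwards with z
      exact ((Complex.measurable_exp.comp
        ((measurable_const.mul Complex.measurable_ofReal))).mul hgm).aestronglyMeasurable
    · exact key_int z₀ hz₀' g hgm hg_le
    · exact (((Complex.measurable_exp.comp
        ((measurable_const.mul Complex.measurable_ofReal))).mul
        Complex.measurable_ofReal.neg).mul hgm).aestronglyMeasurable
    · -- bound
      filter_upwards [ae_restrict_mem measurableSet_Ioi] with t ht z hz
      have ht' : (0:ℝ) < t := ht
      have hzre : σ + ε < z.re := by
        have hd : dist z z₀ < ε := Metric.mem_ball.1 hz
        rw [Complex.dist_eq] at hd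
        have h1 : |(z - z₀).re| ≤ ‖z - z₀‖ := Complex.abs_re_le_norm (z - z₀)
        have h2 : |z.re - z₀.re| < ε := by
          simpa [Complex.sub_re] using lt_of_le_of_lt h1 hd
        have h3 := (abs_lt.1 h2).1
        have hz₀re : z₀.re = σ + 2 * ε := by rw [hε]; ring
        linarith
      have hnorm : ‖Complex.exp (-z * t) * (-(t:ℂ)) * g t‖
          = Real.exp (-z.re * t) * t * ‖g t‖ := by
        have hre : (-z * (t:ℂ)).re = -z.re * t := by simp [Complex.mul_re]
        simp [map_mul, Complex.norm_exp, hre, abs_of_pos ht']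
      rw [hnorm]
      have hb1 : t * Real.exp (-(ε * t)) ≤ (Real.exp 1 * ε)⁻¹ := by
        have h : ε * t ≤ Real.exp (ε * t - 1) := by
          linarith [Real.add_one_le_exp (ε * t - 1)]
        rw [Real.exp_sub, le_div_iff₀ (Real.exp_pos 1)] at h
        rw [Real.exp_neg, ← div_eq_mul_inv, ← one_div,
          div_le_div_iff₀ (Real.exp_pos _) (by positivity)]
        nlinarith
      have e1 : Real.exp (-z.re * t) ≤ Real.exp (-σ * t) * Real.exp (-(ε * t)) := by
        rw [← Real.exp_add]
        apply Real.exp_le_exp.2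
        nlinarith
      calc Real.exp (-z.re * t) * t * ‖g t‖
          ≤ (Real.exp (-σ * t) * Real.exp (-(ε * t))) * t * ‖f t‖ := by
            apply mul_le_mul (mul_le_mul_of_nonneg_right e1 ht'.le) (hg_le t)
              (norm_nonneg _)
            positivity
        _ = (t * Real.exp (-(ε * t))) * (Real.exp (-σ * t) * ‖f t‖) := by ring
        _ ≤ (Real.exp 1 * ε)⁻¹ * (Real.exp (-σ * t) * ‖f t‖) := by
            apply mul_le_mul_of_nonneg_right hb1
            exact mul_nonneg (Real.exp_nonneg _) (norm_nonneg _)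
    · exact hf.const_mul _
    · -- derivative
      filter_upwards with t z _
      have h1 : HasDerivAt (fun z : ℂ => -z * (t:ℂ)) (-(t:ℂ)) z := by
        simpa using ((hasDerivAt_id z).neg.mul_const (t:ℂ))
      have h2 : HasDerivAt (fun z : ℂ => Complex.exp (-z * t))
          (Complex.exp (-z * t) * (-(t:ℂ))) z := h1.cexp
      simpa using h2.mul_const (g t)
  -- F vanishes on the whole half plane
  have hF_zero : EqOn F 0 U := by
    apply (hF_diff.analyticOnNhd hU_open).eqOn_zero_of_preconnected_of_frequently_eq_zero
      ((convex_halfSpace_re_gt σ).isPreconnected) (z₀ := ((σ + 1 : ℝ) : ℂ))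
      (by simp [hU])
    have htend : Tendsto (fun n : ℕ => ((σ + 1 + 1 / (n + 1) : ℝ) : ℂ)) atTop
        (𝓝[≠] ((σ + 1 : ℝ) : ℂ)) := by
      apply tendsto_nhdsWithin_of_tendsto_nhds_of_eventually_within
      · have : Tendsto (fun n : ℕ => (σ + 1 + 1 / (n + 1) : ℝ)) atTop (𝓝 (σ + 1)) := by
          have h0 : Tendsto (fun n : ℕ => 1 / ((n:ℝ) + 1)) atTop (𝓝 0) :=
            tendsto_one_div_add_atTop_nhds_zero_nat
          have := (tendsto_const_nhds (x := σ + 1) (f := atTop (α := ℕ))).add h0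
          simpa using this
        exact (Complex.continuous_ofReal.tendsto _).comp this
      · filter_upwards with n
        simp only [mem_compl_iff, mem_singleton_iff]
        intro hcon
        have : (σ + 1 + 1 / ((n:ℝ) + 1)) = σ + 1 := by exact_mod_cast hcon
        have hn : (0:ℝ) < 1 / ((n:ℝ) + 1) := by positivity
        linarith
    apply htend.frequently
    apply Frequently.of_forall
    intro n
    apply hF_real
    have hn : (0:ℝ) < 1 / ((n:ℝ) + 1) := by positivity
    linarith
  -- the weighted function H
  set a : ℝ := σ + 1 with ha
  set H : ℝ → ℂ := Set.indicator (Ioi (0:ℝ)) (fun t => Complex.exp (-((a:ℝ):ℂ) * t) * g t) with hH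
  have haU : σ < ((a:ℝ):ℂ).re := by simp [ha]
  have hH_int : Integrable H :=
    (key_int a haU g hgm hg_le).integrable_indicator measurableSet_Ioi
  -- the Fourier transform of H vanishes identically
  have hFourier : ∀ ξ : ℝ, 𝓕 H ξ = 0 := by
    intro ξ
    have h1 : 𝓕 H ξ = ∫ v : ℝ, 𝐞 (-(v * ξ)) • H v := Real.fourier_real_eq H ξ
    have h2 : ∀ v : ℝ, 𝐞 (-(v * ξ)) • H v
        = Set.indicator (Ioi (0:ℝ))
          (fun v : ℝ => Complex.exp (-(((a:ℝ):ℂ) + 2 * Real.pi * ξ * Complex.I) * v) * g v) v := by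
      intro v
      by_cases hv : v ∈ Ioi (0:ℝ)
      · rw [hH, Set.indicator_of_mem hv, Set.indicator_of_mem hv]
        rw [Circle.smul_def, Real.fourierChar_apply, smul_eq_mul, ← mul_assoc, ← Complex.exp_add]
        congr 2
        push_cast
        ring
      · rw [hH, Set.indicator_of_notMem hv, Set.indicator_of_notMem hv, smul_zero]
    have hmem : (((a:ℝ):ℂ) + 2 * Real.pi * ξ * Complex.I) ∈ U := by
      have hre : (((a:ℝ):ℂ) + 2 * Real.pi * ξ * Complex.I).re = a := by simp
      simp only [hU, mem_setOf_eq, hre, ha]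
      linarith
    have h3 := hF_zero hmem
    rw [hF] at h3
    rw [h1]
    simp_rw [h2]
    rw [integral_indicator measurableSet_Ioi]
    simpa using h3
  -- multiplication formula: ∫ H ψ = 0 for every Schwartz ψ
  have hflip : (innerₗ ℝ).flip = innerₗ ℝ := by
    apply LinearMap.ext; intro x; apply LinearMap.ext; intro y
    exact real_inner_comm x y
  have hmul : ∀ ψ : SchwartzMap ℝ ℂ, ∫ x : ℝ, H x * ψ x = 0 := by
    intro ψ
    set ψ' := (SchwartzMap.fourierTransformCLE ℂ (SchwartzMap ℝ ℂ)).symm ψ with hψ'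
    have h5 : (SchwartzMap.fourierTransformCLE ℂ (SchwartzMap ℝ ℂ)) ψ' = ψ :=
      (SchwartzMap.fourierTransformCLE ℂ (SchwartzMap ℝ ℂ)).apply_symm_apply ψ
    have hψeq : 𝓕 (⇑ψ') = ⇑ψ := by
      rw [← SchwartzMap.fourier_coe, ← SchwartzMap.fourierTransformCLE_apply (R := ℂ)]
      exact congrArg _ h5
    have hform := VectorFourier.integral_fourierIntegral_smul_eq_flip (e := Real.fourierChar)
      (L := innerₗ ℝ) (μ := volume) (ν := volume) Real.continuous_fourierChar
      continuous_inner hH_int ψ'.integrable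
    rw [hflip] at hform
    have hlhs : (∫ ξ : ℝ,
        (VectorFourier.fourierIntegral Real.fourierChar volume (innerₗ ℝ) H ξ) • ψ' ξ) = 0 := by
      have hz : ∀ ξ : ℝ,
          (VectorFourier.fourierIntegral Real.fourierChar volume (innerₗ ℝ) H ξ) • ψ' ξ = 0 := by
        intro ξ
        have h6 : VectorFourier.fourierIntegral Real.fourierChar volume (innerₗ ℝ) H ξ
            = 𝓕 H ξ := rfl
        rw [h6, hFourier ξ, zero_smul]
      simp_rw [hz]
      simp
    rw [hlhs] at hform
    have h7 : ∀ x : ℝ, H x * ψ x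
        = H x • VectorFourier.fourierIntegral Real.fourierChar volume (innerₗ ℝ) (⇑ψ') x := by
      intro x
      have h8 : VectorFourier.fourierIntegral Real.fourierChar volume (innerₗ ℝ) (⇑ψ') x
          = 𝓕 (⇑ψ') x := rfl
      rw [h8, hψeq, smul_eq_mul]
    calc (∫ x : ℝ, H x * ψ x)
        = ∫ x : ℝ, H x • VectorFourier.fourierIntegral Real.fourierChar volume
            (innerₗ ℝ) (⇑ψ') x := by simp_rw [h7]
      _ = 0 := hform.symm
  -- conclude H = 0 a.e.
  have hH0 : ∀ᵐ x : ℝ ∂volume, H x = 0 := by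
    apply ae_eq_zero_of_integral_contDiff_smul_eq_zero hH_int.locallyIntegrable
    intro g' hg'smooth hg'supp
    have hsm : ContDiff ℝ ((⊤ : ℕ∞)) (fun x : ℝ => ((g' x : ℝ) : ℂ)) :=
      Complex.ofRealCLM.contDiff.comp hg'smooth
    have hsupp : HasCompactSupport (fun x : ℝ => ((g' x : ℝ) : ℂ)) :=
      hg'supp.comp_left (g := fun r : ℝ => (r : ℂ)) Complex.ofReal_zero
    obtain ⟨ψ, hψ⟩ := exists_schwartz_of_hasCompactSupport hsm hsupp
    have h9 : ∀ x : ℝ, g' x • H x = H x * ψ x := by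
      intro x
      rw [hψ]
      rw [Complex.real_smul]
      ring
    simp_rw [h9]
    exact hmul ψ
  -- finish
  have hH0' : ∀ᵐ x ∂(volume.restrict (Ioi (0:ℝ))), H x = 0 := ae_restrict_of_ae hH0
  filter_upwards [hH0', ae_restrict_mem measurableSet_Ioi] with t h1 h2
  rw [hH, Set.indicator_of_mem h2] at h1
  have hexp_ne : Complex.exp (-((a:ℝ):ℂ) * t) ≠ 0 := Complex.exp_ne_zero _
  have h10 := (mul_eq_zero.mp h1).resolve_left hexp_ne
  simp only [hg] at h10
  exact_mod_cast h10
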